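/- (Armijo step-size lower bound.) Let x ∈ relint(X) with v(x) ≠ 0 and let α(x) = δ^ℓ ᾱ(x) be the Armijo step-size, where ℓ is the smallest nonnegative integer with f(x + δ^ℓ ᾱ(x) v(x)) − f(x) ≤ −μ δ^ℓ ᾱ(x) ‖v(x)‖ₓ². Then α(x) ≥ min{2(1−μ)βδ/L, ᾱ(x)}. -/

import Mathlib

open Matrix Filter Set

namespace HBA

noncomputable section

variable {n m : ℕ}

/-- Feasible set `X = {x | Ax = b, x ≥ 0}`. -/
def Feas (A : Matrix (Fin m) (Fin n) ℝ) (b : Fin m → ℝ) : Set (Fin n → ℝ) :=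
  {x | A *ᵥ x = b ∧ ∀ i, 0 ≤ x i}

/-- Relative interior of the feasible set: `{x | Ax = b, x > 0}`. -/
def RelInt (A : Matrix (Fin m) (Fin n) ℝ) (b : Fin m → ℝ) : Set (Fin n → ℝ) :=
  {x | A *ᵥ x = b ∧ ∀ i, 0 < x i}

/-- Euclidean norm on `Fin n → ℝ`. -/
def euclNorm (x : Fin n → ℝ) : ℝ := Real.sqrt (∑ i, (x i) ^ 2)

/-- The linear functional `h ↦ ∑ i, v i * h i`, as a continuous linear map. -/
def toDualCLM (v : Fin n → ℝ) : (Fin n → ℝ) →L[ℝ] ℝ :=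
  ∑ i, v i • (ContinuousLinearMap.proj i : (Fin n → ℝ) →L[ℝ] ℝ)

/-- Hessian metric `H(x) = diag(θ₁''(x₁),…,θₙ''(xₙ))`, where `D i = θᵢ''`. -/
def Hmat (D : Fin n → ℝ → ℝ) (x : Fin n → ℝ) : Matrix (Fin n) (Fin n) ℝ :=
  Matrix.diagonal fun i => D i (x i)

/-- Inverse Hessian metric `H(x)⁻¹ = diag(1/θᵢ''(xᵢ))`. -/
def Hinv (D : Fin n → ℝ → ℝ) (x : Fin n → ℝ) : Matrix (Fin n) (Fin n) ℝ :=
  Matrix.diagonal fun i => (D i (x i))⁻¹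

/-- Continuous extension of `H(x)⁻¹` to the boundary, setting `1/θᵢ''(xᵢ) := 0` if `xᵢ = 0`. -/
def HinvC (D : Fin n → ℝ → ℝ) (x : Fin n → ℝ) : Matrix (Fin n) (Fin n) ℝ :=
  Matrix.diagonal fun i => if x i = 0 then 0 else (D i (x i))⁻¹

/-- Dual variable `y(x) = (A H(x)⁻¹ Aᵀ)⁻¹ A H(x)⁻¹ ∇f(x)`. -/
def dualY (A : Matrix (Fin m) (Fin n) ℝ) (D : Fin n → ℝ → ℝ)
    (g : (Fin n → ℝ) → Fin n → ℝ) (x : Fin n → ℝ) : Fin m → ℝ :=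
  (A * Hinv D x * Aᵀ)⁻¹ *ᵥ (A *ᵥ (Hinv D x *ᵥ g x))

/-- Continuous boundary extension of the dual variable. -/
def dualYC (A : Matrix (Fin m) (Fin n) ℝ) (D : Fin n → ℝ → ℝ)
    (g : (Fin n → ℝ) → Fin n → ℝ) (x : Fin n → ℝ) : Fin m → ℝ :=
  (A * HinvC D x * Aᵀ)⁻¹ *ᵥ (A *ᵥ (HinvC D x *ᵥ g x))

/-- Reduced cost `r(x) = ∇f(x) − Aᵀ y(x)`. -/
def redCost (A : Matrix (Fin m) (Fin n) ℝ) (D : Fin n → ℝ → ℝ)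
    (g : (Fin n → ℝ) → Fin n → ℝ) (x : Fin n → ℝ) : Fin n → ℝ :=
  g x - Aᵀ *ᵥ dualY A D g x

/-- Continuous boundary extension of the reduced cost. -/
def redCostC (A : Matrix (Fin m) (Fin n) ℝ) (D : Fin n → ℝ → ℝ)
    (g : (Fin n → ℝ) → Fin n → ℝ) (x : Fin n → ℝ) : Fin n → ℝ :=
  g x - Aᵀ *ᵥ dualYC A D g x

/-- Search direction `v(x) = −H(x)⁻¹ r(x)`. -/
def searchDir (A : Matrix (Fin m) (Fin n) ℝ) (D : Fin n → ℝ → ℝ)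
    (g : (Fin n → ℝ) → Fin n → ℝ) (x : Fin n → ℝ) : Fin n → ℝ :=
  -(Hinv D x *ᵥ redCost A D g x)

/-- The squared local norm `‖z‖ₓ² = zᵀ H(x) z`. -/
def xnorm2 (D : Fin n → ℝ → ℝ) (x z : Fin n → ℝ) : ℝ := z ⬝ᵥ (Hmat D x *ᵥ z)

/-- Bootstrap step-size `ᾱ(x) = min{α₀(x), 2β/L}`, where
`α₀(x) = min{xᵢθᵢ''(xᵢ)/rᵢ(x) : rᵢ(x) > 0}` and `min ∅ = +∞`. -/
def alphaBar (A : Matrix (Fin m) (Fin n) ℝ) (D : Fin n → ℝ → ℝ)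
    (g : (Fin n → ℝ) → Fin n → ℝ) (β Lf : ℝ) (x : Fin n → ℝ) : ℝ :=
  sInf (insert (2 * β / Lf)
    {a : ℝ | ∃ i, 0 < redCost A D g x i ∧ a = x i * D i (x i) / redCost A D g x i})

/-- The Armijo sufficient-decrease condition at backtracking exponent `l`:
`f(x + δ^l ᾱ(x) v(x)) − f(x) ≤ −μ δ^l ᾱ(x) ‖v(x)‖ₓ²`. -/
def armijoCond (A : Matrix (Fin m) (Fin n) ℝ) (D : Fin n → ℝ → ℝ)
    (g : (Fin n → ℝ) → Fin n → ℝ) (f : (Fin n → ℝ) → ℝ) (β Lf μ δ : ℝ)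
    (x : Fin n → ℝ) (l : ℕ) : Prop :=
  f (x + (δ ^ l * alphaBar A D g β Lf x) • searchDir A D g x) - f x ≤
    -(μ * (δ ^ l * alphaBar A D g β Lf x) * xnorm2 D x (searchDir A D g x))

/-- The Armijo step-size `α(x) = δ^ℓ ᾱ(x)`, `ℓ` the smallest exponent giving sufficient decrease. -/
def stepSize (A : Matrix (Fin m) (Fin n) ℝ) (D : Fin n → ℝ → ℝ)
    (g : (Fin n → ℝ) → Fin n → ℝ) (f : (Fin n → ℝ) → ℝ) (β Lf μ δ : ℝ)
    (x : Fin n → ℝ) : ℝ :=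
  δ ^ sInf {l : ℕ | armijoCond A D g f β Lf μ δ x l} * alphaBar A D g β Lf x

/-- The iterates of the Hessian barrier algorithm: `x⁰ = x0`, `x^{k+1} = x^k + α(x^k) v(x^k)`. -/
def hba (A : Matrix (Fin m) (Fin n) ℝ) (D : Fin n → ℝ → ℝ)
    (g : (Fin n → ℝ) → Fin n → ℝ) (f : (Fin n → ℝ) → ℝ) (β Lf μ δ : ℝ)
    (x0 : Fin n → ℝ) : ℕ → Fin n → ℝ
  | 0 => x0
  | k + 1 =>
      hba A D g f β Lf μ δ x0 k
        + stepSize A D g f β Lf μ δ (hba A D g f β Lf μ δ x0 k)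
            • searchDir A D g (hba A D g f β Lf μ δ x0 k)

end

end HBA


section Aux

open Matrix

lemma aux_euclNorm_sq {n : ℕ} (x : Fin n → ℝ) : HBA.euclNorm x ^ 2 = ∑ i, (x i) ^ 2 :=
  Real.sq_sqrt (Finset.sum_nonneg fun _ _ => sq_nonneg _)

lemma aux_cs {n : ℕ} (d v : Fin n → ℝ) :
    ∑ i, d i * v i ≤ HBA.euclNorm d * HBA.euclNorm v := by
  have h := Finset.sum_mul_sq_le_sq_mul_sq Finset.univ d v
  have h2 : ∑ i, d i * v i ≤ Real.sqrt ((∑ i, d i ^ 2) * ∑ i, v i ^ 2) := by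
    calc ∑ i, d i * v i ≤ |∑ i, d i * v i| := le_abs_self _
      _ = Real.sqrt ((∑ i, d i * v i) ^ 2) := (Real.sqrt_sq_eq_abs _).symm
      _ ≤ _ := Real.sqrt_le_sqrt h
  rwa [Real.sqrt_mul (Finset.sum_nonneg fun _ _ => sq_nonneg _)] at h2

lemma aux_euclNorm_smul {n : ℕ} (s : ℝ) (v : Fin n → ℝ) :
    HBA.euclNorm (s • v) = |s| * HBA.euclNorm v := by
  unfold HBA.euclNorm
  rw [← Real.sqrt_sq_eq_abs, ← Real.sqrt_mul (sq_nonneg _)]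
  congr 1
  rw [Finset.mul_sum]
  congr 1; ext i; simp [mul_pow]

lemma aux_toDualCLM_apply {n : ℕ} (w z : Fin n → ℝ) :
    HBA.toDualCLM w z = ∑ i, w i * z i := by
  simp [HBA.toDualCLM, ContinuousLinearMap.sum_apply, mul_comm]

lemma aux_inj {m n : ℕ} (A : Matrix (Fin m) (Fin n) ℝ) (hrank : A.rank = m) :
    Function.Injective (Aᵀ.mulVecLin) := by
  have h1 : Aᵀ.rank = m := by rw [Matrix.rank_transpose, hrank]
  rw [Matrix.rank] at h1
  have h2 := LinearMap.finrank_range_add_finrank_ker (Aᵀ.mulVecLin)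
  rw [h1] at h2
  simp only [Module.finrank_pi, Fintype.card_fin, add_eq_left] at h2
  rw [← LinearMap.ker_eq_bot]
  exact Submodule.finrank_eq_zero.mp h2

lemma aux_isUnit {m n : ℕ} (A : Matrix (Fin m) (Fin n) ℝ) (e : Fin n → ℝ)
    (he : ∀ i, 0 < e i) (hinj : Function.Injective (Aᵀ.mulVecLin)) :
    IsUnit (A * Matrix.diagonal e * Aᵀ).det := by
  have hE : (Matrix.diagonal e).PosDef := Matrix.PosDef.diagonal he
  have hM : (A * Matrix.diagonal e * Aᵀ).PosDef := by
    have hB : Function.Injective A.vecMul := fun a₁ a₂ h =>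
      hinj (by simpa [Matrix.mulVec_transpose] using h)
    simpa using hE.mul_mul_conjTranspose_same hB
  exact hM.isUnit.map (Matrix.detMonoidHom)

/-- Descent lemma via monotonicity. -/
lemma aux_descent {n : ℕ} (f : (Fin n → ℝ) → ℝ) (g : (Fin n → ℝ) → Fin n → ℝ)
    (S : Set (Fin n → ℝ)) (Lf : ℝ)
    (hgrad : ∀ z ∈ S, HasFDerivAt f (HBA.toDualCLM (g z)) z)
    (hLip : ∀ z ∈ S, ∀ z' ∈ S, HBA.euclNorm (g z - g z') ≤ Lf * HBA.euclNorm (z - z'))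
    (x v : Fin n → ℝ) (ab : ℝ) (hab : 0 < ab)
    (hfeas : ∀ s ∈ Set.Icc (0:ℝ) ab, x + s • v ∈ S)
    (t : ℝ) (ht0 : 0 ≤ t) (ht : t ≤ ab) :
    f (x + t • v) - f x ≤ t * (∑ i, g x i * v i) + Lf * t^2 * (∑ i, (v i)^2) / 2 := by
  set G : ℝ := ∑ i, g x i * v i with hG
  set V2 : ℝ := ∑ i, (v i)^2 with hV2
  set φ : ℝ → ℝ := fun s => f (x + s • v) - s * G - Lf * s^2 * V2 / 2 with hφdef
  have hx0 : x ∈ S := by simpa using hfeas 0 ⟨le_rfl, hab.le⟩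
  have hcurve : ∀ s : ℝ, HasDerivAt (fun u : ℝ => x + u • v) v s := by
    intro s
    simpa using ((hasDerivAt_id s).smul_const v).const_add x
  have hψ : ∀ s ∈ Set.Icc (0:ℝ) ab,
      HasDerivAt (fun u : ℝ => f (x + u • v)) (∑ i, g (x + s • v) i * v i) s := by
    intro s hs
    have h1 := (hgrad _ (hfeas s hs)).comp_hasDerivAt s (hcurve s)
    simp only [aux_toDualCLM_apply] at h1
    exact h1
  have hφ : ∀ s ∈ Set.Icc (0:ℝ) ab,
      HasDerivAt φ ((∑ i, g (x + s • v) i * v i) - G - Lf * s * V2) s := by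
    intro s hs
    have h1 := hψ s hs
    have h2 : HasDerivAt (fun u : ℝ => u * G + Lf * u^2 * V2 / 2) (G + Lf * s * V2) s := by
      have ha : HasDerivAt (fun u : ℝ => u * G) G s := by
        simpa using (hasDerivAt_id s).mul_const G
      have hb : HasDerivAt (fun u : ℝ => Lf * u^2 * V2 / 2) (Lf * s * V2) s := by
        have hc := (((hasDerivAt_pow 2 s).const_mul Lf).mul_const V2).div_const 2
        exact hc.congr_deriv (by push_cast; ring)
      exact ha.add hb
    have h3 := h1.sub h2
    have h4 : φ = ((fun u : ℝ => f (x + u • v)) - fun u => u * G + Lf * u ^ 2 * V2 / 2) := by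
      funext u; simp only [hφdef, Pi.sub_apply]; ring
    rw [h4]
    exact h3.congr_deriv (by ring)
  have hanti : AntitoneOn φ (Set.Icc 0 ab) := by
    apply antitoneOn_of_deriv_nonpos (convex_Icc 0 ab)
    · intro s hs
      exact (hφ s hs).continuousAt.continuousWithinAt
    · intro s hs
      rw [interior_Icc] at hs
      exact (hφ s (Set.Ioo_subset_Icc_self hs)).differentiableAt.differentiableWithinAt
    · intro s hs
      rw [interior_Icc] at hs
      rw [(hφ s (Set.Ioo_subset_Icc_self hs)).deriv]
      have hsum : (∑ i, g (x + s • v) i * v i) - G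
          = ∑ i, (g (x + s • v) - g x) i * v i := by
        rw [hG, ← Finset.sum_sub_distrib]
        congr 1; ext i; simp [sub_mul]
      have hcs := aux_cs (g (x + s • v) - g x) v
      have hlip2 := hLip _ (hfeas s (Set.Ioo_subset_Icc_self hs)) _ hx0
      have hxx : x + s • v - x = s • v := by abel
      rw [hxx, aux_euclNorm_smul, abs_of_pos hs.1] at hlip2
      have hEnonneg : 0 ≤ HBA.euclNorm v := Real.sqrt_nonneg _
      have hVsq : HBA.euclNorm v * HBA.euclNorm v = V2 := by
        have h4 := aux_euclNorm_sq v
        nlinarith [h4]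
      have h5 : (∑ i, (g (x + s • v) - g x) i * v i) ≤ Lf * s * V2 := by
        calc (∑ i, (g (x + s • v) - g x) i * v i)
            ≤ HBA.euclNorm (g (x + s • v) - g x) * HBA.euclNorm v := hcs
          _ ≤ (Lf * (s * HBA.euclNorm v)) * HBA.euclNorm v := by
              apply mul_le_mul_of_nonneg_right hlip2 hEnonneg
          _ = Lf * s * (HBA.euclNorm v * HBA.euclNorm v) := by ring
          _ = Lf * s * V2 := by rw [hVsq]
      linarith [hsum, h5]
  have h0m : (0:ℝ) ∈ Set.Icc (0:ℝ) ab := ⟨le_rfl, hab.le⟩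
  have htm : t ∈ Set.Icc (0:ℝ) ab := ⟨ht0, ht⟩
  have hmono := hanti h0m htm ht0
  have hφ0 : φ 0 = f x := by simp [hφdef]
  have hφt : φ t = f (x + t • v) - t * G - Lf * t^2 * V2 / 2 := rfl
  rw [hφ0, hφt] at hmono
  linarith

end Aux

set_option maxHeartbeats 1000000 in
open Matrix Filter Set in
theorem stmt6
    {n m : ℕ}
    (A : Matrix (Fin m) (Fin n) ℝ) (b : Fin m → ℝ)
    (hrank : A.rank = m)
    (f : (Fin n → ℝ) → ℝ) (g : (Fin n → ℝ) → Fin n → ℝ)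
    (hgrad : ∀ x ∈ HBA.Feas A b, HasFDerivAt f (HBA.toDualCLM (g x)) x)
    (Lf : ℝ) (hLf : 0 < Lf)
    (hLip : ∀ x ∈ HBA.Feas A b, ∀ x' ∈ HBA.Feas A b,
      HBA.euclNorm (g x - g x') ≤ Lf * HBA.euclNorm (x - x'))
    (x0 : Fin n → ℝ) (hx0 : x0 ∈ HBA.RelInt A b)
    (hbdd : Bornology.IsBounded {x | x ∈ HBA.Feas A b ∧ f x ≤ f x0})
    (θ θd D : Fin n → ℝ → ℝ)
    (hθ1 : ∀ i, ∀ t ∈ Set.Ioi (0:ℝ), HasDerivAt (θ i) (θd i t) t)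
    (hθ2 : ∀ i, ∀ t ∈ Set.Ioi (0:ℝ), HasDerivAt (θd i) (D i t) t)
    (hDpos : ∀ i, ∀ t ∈ Set.Ioi (0:ℝ), 0 < D i t)
    (hDlip : ∀ i, ∀ t ∈ Set.Ioi (0:ℝ), ∃ r > (0:ℝ), ∃ K : NNReal,
      LipschitzOnWith K (D i) (Set.Ioo (t - r) (t + r) ∩ Set.Ioi 0))
    (hsteep : ∀ i, Filter.Tendsto (θd i) (nhdsWithin (0:ℝ) (Set.Ioi 0)) Filter.atBot)
    (β : ℝ) (hβ : 0 < β) (hDβ : ∀ i, ∀ t ∈ Set.Ioi (0:ℝ), β ≤ D i t)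
    (ε : ℝ) (hε : 0 < ε) (hDε : ∀ i, ∀ t ∈ Set.Ioi (0:ℝ), ε ≤ t * D i t)
    (μ δ : ℝ) (hμ : μ ∈ Set.Ioo (0:ℝ) 1) (hδ : δ ∈ Set.Ioo (0:ℝ) 1)
    (x : Fin n → ℝ) (hx : x ∈ HBA.RelInt A b) (hvx : HBA.searchDir A D g x ≠ 0) :
    min (2 * (1 - μ) * β * δ / Lf) (HBA.alphaBar A D g β Lf x) ≤
      HBA.stepSize A D g f β Lf μ δ x := by
  classical
  obtain ⟨hxb, hxpos⟩ := hx
  obtain ⟨hμ0, hμ1⟩ := hμ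
  obtain ⟨hδ0, hδ1⟩ := hδ
  set v : Fin n → ℝ := HBA.searchDir A D g x with hv
  set r : Fin n → ℝ := HBA.redCost A D g x with hr
  set ab : ℝ := HBA.alphaBar A D g β Lf x with hab
  set N2 : ℝ := HBA.xnorm2 D x v with hN2def
  have hDx : ∀ i, 0 < D i (x i) := fun i => hDpos i (x i) (hxpos i)
  have hEdiag : HBA.Hinv D x = Matrix.diagonal (fun i => (D i (x i))⁻¹) := rfl
  have hEpos : ∀ i, 0 < (D i (x i))⁻¹ := fun i => inv_pos.mpr (hDx i)
  have hinj := aux_inj A hrank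
  have hMdet := aux_isUnit A (fun i => (D i (x i))⁻¹) hEpos hinj
  -- A v = 0
  have hAv : A *ᵥ v = 0 := by
    have hMinv : (A * HBA.Hinv D x * Aᵀ) * (A * HBA.Hinv D x * Aᵀ)⁻¹ = 1 :=
      Matrix.mul_nonsing_inv _ (by rw [hEdiag]; exact hMdet)
    have hexp : A *ᵥ (HBA.Hinv D x *ᵥ r) =
        A *ᵥ (HBA.Hinv D x *ᵥ g x)
          - ((A * HBA.Hinv D x * Aᵀ) * (A * HBA.Hinv D x * Aᵀ)⁻¹) *ᵥ
              (A *ᵥ (HBA.Hinv D x *ᵥ g x)) := by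
      rw [hr]
      show A *ᵥ (HBA.Hinv D x *ᵥ (g x - Aᵀ *ᵥ HBA.dualY A D g x)) = _
      rw [Matrix.mulVec_sub, Matrix.mulVec_sub]
      congr 1
      show A *ᵥ (HBA.Hinv D x *ᵥ (Aᵀ *ᵥ ((A * HBA.Hinv D x * Aᵀ)⁻¹ *ᵥ
        (A *ᵥ (HBA.Hinv D x *ᵥ g x))))) = _
      rw [Matrix.mulVec_mulVec, Matrix.mulVec_mulVec, Matrix.mulVec_mulVec,
        Matrix.mulVec_mulVec, Matrix.mul_assoc, Matrix.mul_assoc]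
    have hvr : v = -(HBA.Hinv D x *ᵥ r) := rfl
    rw [hvr, Matrix.mulVec_neg, hexp, hMinv, Matrix.one_mulVec, sub_self, neg_zero]
  -- pointwise description of v
  have hvi : ∀ i, v i = -((D i (x i))⁻¹ * r i) := by
    intro i
    have hvr : v = -(HBA.Hinv D x *ᵥ r) := rfl
    rw [hvr, Pi.neg_apply, hEdiag, Matrix.mulVec_diagonal]
  have hri : ∀ i, r i = -(D i (x i) * v i) := by
    intro i
    have hDv : D i (x i) * v i = -(r i) := by
      rw [hvi i, mul_neg, ← mul_assoc, mul_inv_cancel₀ (hDx i).ne', one_mul]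
    linarith
  -- N2 as a sum
  have hN2 : N2 = ∑ i, D i (x i) * (v i)^2 := by
    have h1 : N2 = v ⬝ᵥ (HBA.Hmat D x *ᵥ v) := rfl
    rw [h1, dotProduct]
    congr 1; ext i
    show v i * ((Matrix.diagonal fun j => D j (x j)) *ᵥ v) i = _
    rw [Matrix.mulVec_diagonal]
    ring
  have hN2pos : 0 < N2 := by
    rw [hN2]
    obtain ⟨i, hi⟩ := Function.ne_iff.mp hvx
    have hi' : v i ≠ 0 := by simpa using hi
    apply Finset.sum_pos' (fun j _ => mul_nonneg (hDx j).le (sq_nonneg _))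
    refine ⟨i, Finset.mem_univ i, mul_pos (hDx i) ?_⟩
    exact lt_of_le_of_ne (sq_nonneg _) (Ne.symm (pow_ne_zero 2 hi'))
  -- gradient dot v
  have hgv : ∑ i, g x i * v i = -N2 := by
    have hgx : g x = r + Aᵀ *ᵥ HBA.dualY A D g x := by
      have h1 : r = g x - Aᵀ *ᵥ HBA.dualY A D g x := rfl
      rw [h1]; abel
    have hsplit : ∑ i, g x i * v i
        = (∑ i, r i * v i) + (Aᵀ *ᵥ HBA.dualY A D g x) ⬝ᵥ v := by
      rw [dotProduct, ← Finset.sum_add_distrib]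
      congr 1; ext i
      rw [hgx]; simp [add_mul]
    have hzero : (Aᵀ *ᵥ HBA.dualY A D g x) ⬝ᵥ v = 0 := by
      rw [Matrix.mulVec_transpose, ← Matrix.dotProduct_mulVec, hAv,
        dotProduct_zero]
    have hrv : ∑ i, r i * v i = -N2 := by
      rw [hN2, ← Finset.sum_neg_distrib]
      congr 1; ext i
      rw [hri i]; ring
    rw [hsplit, hzero, hrv, add_zero]
  -- alphaBar facts
  set Sset : Set ℝ :=
    {a : ℝ | ∃ i, 0 < HBA.redCost A D g x i ∧
      a = x i * D i (x i) / HBA.redCost A D g x i} with hSset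
  have habdef : ab = sInf (insert (2 * β / Lf) Sset) := rfl
  have hSfin : Sset.Finite := by
    apply Set.Finite.subset
      (Set.finite_range fun i => x i * D i (x i) / HBA.redCost A D g x i)
    rintro a ⟨i, _, rfl⟩
    exact ⟨i, rfl⟩
  have hTfin : (insert (2 * β / Lf) Sset).Finite := hSfin.insert _
  have hTne : (insert (2 * β / Lf) Sset).Nonempty := ⟨_, Set.mem_insert _ _⟩
  have habmem : ab ∈ insert (2 * β / Lf) Sset := by
    rw [habdef]; exact hTne.csInf_mem hTfin
  have hab_pos : 0 < ab := by
    rcases habmem with h | ⟨i, hi, h⟩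
    · rw [h]; positivity
    · rw [h]
      have h1 := hDx i
      have h2 := hxpos i
      positivity
  have hab_le : ∀ i, 0 < r i → ab ≤ x i * D i (x i) / r i := by
    intro i hi
    rw [habdef]
    exact csInf_le hTfin.bddBelow (Set.mem_insert_of_mem _ ⟨i, hi, rfl⟩)
  -- feasibility of the segment
  have hfeas : ∀ s ∈ Set.Icc (0:ℝ) ab, x + s • v ∈ HBA.Feas A b := by
    intro s hs
    constructor
    · rw [Matrix.mulVec_add, Matrix.mulVec_smul, hAv, smul_zero, add_zero, hxb]
    · intro i
      show 0 ≤ x i + s * v i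
      by_cases hrpos : 0 < r i
      · have h1 : s ≤ x i * D i (x i) / r i := le_trans hs.2 (hab_le i hrpos)
        have h2 : s * r i ≤ x i * D i (x i) := by
          rw [le_div_iff₀ hrpos] at h1
          linarith
        have hD := hDx i
        have hinv1 : (D i (x i))⁻¹ * D i (x i) = 1 := inv_mul_cancel₀ hD.ne'
        have h8 : x i * ((D i (x i))⁻¹ * D i (x i)) = x i := by
          rw [hinv1, mul_one]
        rw [hvi i]
        nlinarith [mul_le_mul_of_nonneg_right h2 (hEpos i).le, h8, hEpos i]
      · push_neg at hrpos
        have hvpos : 0 ≤ v i := by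
          rw [hvi i]
          nlinarith [hEpos i]
        nlinarith [hxpos i, hs.1]
  -- descent lemma
  have hdesc : ∀ t, 0 ≤ t → t ≤ ab →
      f (x + t • v) - f x ≤ t * (-N2) + Lf * t^2 * (∑ i, (v i)^2) / 2 := by
    intro t ht0 ht
    have h1 := aux_descent f g (HBA.Feas A b) Lf
      (fun z hz => hgrad z hz) (fun z hz z' hz' => hLip z hz z' hz')
      x v ab hab_pos hfeas t ht0 ht
    rwa [hgv] at h1
  have hV2b : β * (∑ i, (v i)^2) ≤ N2 := by
    rw [hN2, Finset.mul_sum]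
    apply Finset.sum_le_sum
    intro i _
    nlinarith [hDβ i (x i) (hxpos i), sq_nonneg (v i)]
  -- main case split
  set L0 : ℕ := sInf {l : ℕ | HBA.armijoCond A D g f β Lf μ δ x l} with hL0
  have hstep : HBA.stepSize A D g f β Lf μ δ x = δ ^ L0 * ab := rfl
  rcases Nat.eq_zero_or_pos L0 with h0 | hLpos
  · rw [hstep, h0, pow_zero, one_mul]
    exact min_le_right _ _
  · obtain ⟨k, hk⟩ : ∃ k, L0 = k + 1 := ⟨L0 - 1, by omega⟩
    have hknot : k ∉ {l : ℕ | HBA.armijoCond A D g f β Lf μ δ x l} :=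
      Nat.notMem_of_lt_sInf (by rw [← hL0, hk]; exact Nat.lt_succ_self k)
    simp only [Set.mem_setOf_eq, HBA.armijoCond, not_le] at hknot
    set t : ℝ := δ ^ k * ab with htdef
    have ht0 : 0 < t := mul_pos (pow_pos hδ0 k) hab_pos
    have htle : t ≤ ab := by
      have h1 : δ ^ k ≤ 1 := pow_le_one₀ hδ0.le hδ1.le
      nlinarith
    have hfail : -(μ * t * N2) < f (x + t • v) - f x := hknot
    rw [hstep, hk]
    clear hknot hstep habdef habmem hab_le hN2 hgv hAv hvi hri hfeas hEdiag hv hr hab hN2def hL0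
    clear_value t N2 ab r v L0 Sset
    have hup := hdesc t ht0.le htle
    have hup2 : f (x + t • v) - f x ≤ t * (-N2) + Lf * t^2 * (N2 / β) / 2 := by
      have hq : (0:ℝ) ≤ Lf * t^2 := by positivity
      have hV2c : (∑ i, (v i)^2) ≤ N2 / β := by
        rw [le_div_iff₀ hβ]
        linarith [hV2b]
      nlinarith [hup, mul_le_mul_of_nonneg_left hV2c hq]
    have hkey : 2 * (1 - μ) * β / Lf < t := by
      have h1 : -(μ * t * N2) < t * (-N2) + Lf * t^2 * (N2 / β) / 2 :=
        lt_of_lt_of_le hfail hup2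
      have h2 : Lf * t^2 * (N2 / β) / 2 = Lf * t^2 * N2 / (2 * β) := by
        field_simp
      rw [h2] at h1
      have h4 : (1 - μ) * t * N2 < Lf * t^2 * N2 / (2 * β) := by linarith
      have h5 : (1 - μ) * t * N2 * (2 * β) < Lf * t^2 * N2 :=
        (lt_div_iff₀ (by positivity : (0:ℝ) < 2 * β)).mp h4
      have h6 : 2 * (1 - μ) * β < t * Lf := by
        nlinarith [h5, mul_pos ht0 hN2pos]
      rw [div_lt_iff₀ hLf]
      linarith
    calc min (2 * (1 - μ) * β * δ / Lf) ab ≤ 2 * (1 - μ) * β * δ / Lf :=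
        min_le_left _ _
      _ ≤ δ * t := by
          have h7 : 2 * (1 - μ) * β * δ / Lf = (2 * (1 - μ) * β / Lf) * δ := by ring
          rw [h7]
          nlinarith [hkey]
      _ = δ ^ (k + 1) * ab := by rw [htdef]; ring
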